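/- Let M be an n×n symmetric real matrix with spectral norm at most K and at most r negative eigenvalues. Let P be the orthogonal projection onto the span of eigenvectors of a symmetric matrix N with eigenvalues at most −η < 0, where N = M + Δ for a symmetric Δ supported on rows/columns indexed by a set Q and with ‖Δ‖ ≤ K. Then the trace of the principal submatrix P_{Q,Q} satisfies Tr(P_{Q,Q}) ≥ (η/K)·Tr(P) − r. -/

import Mathlib

open Matrix

/-- Diagonal entry of a conjugation is a quadratic form value. -/
lemma stmt4_quad_form_eq {n : ℕ} (B U : Matrix (Fin n) (Fin n) ℝ) (i : Fin n) :
    (star U * B * U) i i = (fun j => U j i) ⬝ᵥ (B *ᵥ fun j => U j i) := by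
  simp only [star_eq_conjTranspose, mul_apply, conjTranspose_apply, dotProduct, mulVec,
    star_trivial, Finset.sum_mul, Finset.mul_sum]
  rw [Finset.sum_comm]
  apply Finset.sum_congr rfl; intro j _
  apply Finset.sum_congr rfl; intro k _
  ring

lemma stmt4_diag_conj_nonneg {n : ℕ} {B : Matrix (Fin n) (Fin n) ℝ} (hB : B.PosSemidef)
    (U : Matrix (Fin n) (Fin n) ℝ) (i : Fin n) : 0 ≤ (star U * B * U) i i := by
  rw [stmt4_quad_form_eq]
  simpa using hB.dotProduct_mulVec_nonneg (fun j => U j i)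

lemma stmt4_trace_mul_eq {n : ℕ} (H B U : Matrix (Fin n) (Fin n) ℝ) (d : Fin n → ℝ)
    (hH : H = U * Matrix.diagonal d * star U) :
    (H * B).trace = ∑ i, d i * (star U * B * U) i i := by
  have h1 : H * B = U * (Matrix.diagonal d * (star U * B)) := by
    rw [hH]; noncomm_ring
  rw [h1, Matrix.trace_mul_comm, mul_assoc]
  simp [Matrix.trace, Matrix.diag, Matrix.diagonal_mul]

/-- Let M be a symmetric n×n matrix with spectral norm at most K (all eigenvalues
bounded by K in absolute value) and at most r negative eigenvalues. Let N = M + Δ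
with Δ symmetric, supported on a Q×Q principal submatrix, and ‖Δ‖ ≤ K. Let P be the
spectral projection of N onto eigenvalues at most −η < 0. Then
Tr(P_{Q,Q}) ≥ (η/K)·Tr(P) − r. -/
theorem stmt4 (n r : ℕ) (K η : ℝ) (hη : 0 < η) (hK : 0 < K)
    (M Δ : Matrix (Fin n) (Fin n) ℝ) (Q : Finset (Fin n))
    (hM : M.IsHermitian) (hΔ : Δ.IsHermitian)
    (hMnorm : ∀ i, |hM.eigenvalues i| ≤ K)
    (hMneg : (Finset.univ.filter fun i => hM.eigenvalues i < 0).card ≤ r)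
    (hΔnorm : ∀ i, |hΔ.eigenvalues i| ≤ K)
    (hΔsupp : ∀ i j, Δ i j ≠ 0 → i ∈ Q ∧ j ∈ Q)
    (hN : (M + Δ).IsHermitian)
    (P : Matrix (Fin n) (Fin n) ℝ)
    (hP : P = (hN.eigenvectorUnitary : Matrix (Fin n) (Fin n) ℝ)
        * Matrix.diagonal (fun i => if hN.eigenvalues i ≤ -η then (1 : ℝ) else 0)
        * star (hN.eigenvectorUnitary : Matrix (Fin n) (Fin n) ℝ)) :
    (η / K) * P.trace - r ≤ ∑ i ∈ Q, P i i := by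
  set U : Matrix (Fin n) (Fin n) ℝ := (hN.eigenvectorUnitary : Matrix (Fin n) (Fin n) ℝ) with hU_def
  set d : Fin n → ℝ := fun i => if hN.eigenvalues i ≤ -η then (1 : ℝ) else 0 with hd_def
  have hU : U * star U = 1 := (Matrix.mem_unitaryGroup_iff).mp hN.eigenvectorUnitary.2
  have hU' : star U * U = 1 := (Matrix.mem_unitaryGroup_iff').mp hN.eigenvectorUnitary.2
  have hNspec : M + Δ = U * Matrix.diagonal hN.eigenvalues * star U := by
    have := hN.spectral_theorem
    simpa using this
  have hd01 : ∀ i, 0 ≤ d i ∧ d i ≤ 1 := by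
    intro i; simp only [hd_def]; split <;> norm_num
  -- P is PSD
  have hPsd : P.PosSemidef := by
    rw [hP, Matrix.star_eq_conjTranspose]
    exact (Matrix.PosSemidef.diagonal (fun i => (hd01 i).1)).mul_mul_conjTranspose_same U
  -- 1 - P is PSD
  have h1P : (1 - P).PosSemidef := by
    have heq : (1 : Matrix (Fin n) (Fin n) ℝ) - P
        = U * Matrix.diagonal (fun i => 1 - d i) * star U := by
      have hdiag : Matrix.diagonal (fun i => 1 - d i)
          = 1 - Matrix.diagonal d := by
        rw [← Matrix.diagonal_one, ← Matrix.diagonal_sub]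
      rw [hP, hdiag, Matrix.mul_sub, Matrix.mul_one, Matrix.sub_mul, hU]
    rw [heq, Matrix.star_eq_conjTranspose]
    exact (Matrix.PosSemidef.diagonal (fun i => by simp only [Pi.zero_apply]; linarith [(hd01 i).2])).mul_mul_conjTranspose_same U
  -- trace P = ∑ d i
  have htraceP : P.trace = ∑ i, d i := by
    rw [hP, Matrix.trace_mul_cycle, hU', one_mul, Matrix.trace_diagonal]
  -- star U * P * U = diagonal d
  have hUPU : star U * P * U = Matrix.diagonal d := by
    rw [hP]
    simp only [← mul_assoc]
    rw [hU', one_mul, mul_assoc, hU', mul_one]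
  -- Step 1 : trace (N * P) ≤ -η * trace P
  have step1 : ((M + Δ) * P).trace ≤ -η * P.trace := by
    rw [stmt4_trace_mul_eq (M + Δ) P U hN.eigenvalues hNspec, hUPU, htraceP, Finset.mul_sum]
    apply Finset.sum_le_sum
    intro i _
    simp only [Matrix.diagonal_apply_eq, hd_def]
    split
    · next h => nlinarith
    · simp
  -- Step 2 : -(K * r) ≤ trace (M * P)
  set V : Matrix (Fin n) (Fin n) ℝ := (hM.eigenvectorUnitary : Matrix (Fin n) (Fin n) ℝ) with hV_def
  have hV' : star V * V = 1 := (Matrix.mem_unitaryGroup_iff').mp hM.eigenvectorUnitary.2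
  have hMspec : M = V * Matrix.diagonal hM.eigenvalues * star V := by
    have := hM.spectral_theorem
    simpa using this
  set t : Fin n → ℝ := fun j => (star V * P * V) j j with ht_def
  have ht0 : ∀ j, 0 ≤ t j := fun j => stmt4_diag_conj_nonneg hPsd V j
  have ht1 : ∀ j, t j ≤ 1 := by
    intro j
    have h := stmt4_diag_conj_nonneg h1P V j
    have heq : star V * (1 - P) * V = 1 - star V * P * V := by
      rw [Matrix.mul_sub, Matrix.mul_one, Matrix.sub_mul, hV']
    rw [heq] at h
    have : (1 - star V * P * V) j j = 1 - t j := by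
      simp [Matrix.sub_apply, Matrix.one_apply, ht_def]
    linarith [this ▸ h]
  have step2 : -(K * r) ≤ (M * P).trace := by
    rw [stmt4_trace_mul_eq M P V hM.eigenvalues hMspec]
    have hsplit := Finset.sum_filter_add_sum_filter_not Finset.univ
      (fun j => hM.eigenvalues j < 0) (fun j => hM.eigenvalues j * t j)
    have h1 : -(K * r) ≤ ∑ j ∈ Finset.univ.filter (fun j => hM.eigenvalues j < 0),
        hM.eigenvalues j * t j := by
      calc -(K * r) ≤ -(K * (Finset.univ.filter (fun j => hM.eigenvalues j < 0)).card) := by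
            have : ((Finset.univ.filter (fun j => hM.eigenvalues j < 0)).card : ℝ) ≤ r := by
              exact_mod_cast hMneg
            nlinarith
        _ = ∑ _j ∈ Finset.univ.filter (fun j => hM.eigenvalues j < 0), (-K) := by
            rw [Finset.sum_const, nsmul_eq_mul]; ring
        _ ≤ _ := by
            apply Finset.sum_le_sum
            intro j hj
            simp only [Finset.mem_filter] at hj
            have hjK := abs_le.mp (hMnorm j)
            nlinarith [ht0 j, ht1 j, hj.2]
    have h2 : (0:ℝ) ≤ ∑ j ∈ Finset.univ.filter (fun j => ¬ hM.eigenvalues j < 0),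
        hM.eigenvalues j * t j := by
      apply Finset.sum_nonneg
      intro j hj
      simp only [Finset.mem_filter, not_lt] at hj
      exact mul_nonneg hj.2 (ht0 j)
    linarith [hsplit]
  -- Step 3 : -(K * ∑ i ∈ Q, P i i) ≤ trace (Δ * P)
  set c : Fin n → ℝ := fun i => if i ∈ Q then 1 else 0 with hc_def
  set DQ : Matrix (Fin n) (Fin n) ℝ := Matrix.diagonal c with hDQ_def
  set P' : Matrix (Fin n) (Fin n) ℝ := DQ * P * DQ with hP'_def
  have hDQh : DQᴴ = DQ := by
    simp [hDQ_def, Matrix.diagonal_conjTranspose]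
  have hP'psd : P'.PosSemidef := by
    have := hPsd.mul_mul_conjTranspose_same DQ
    rwa [hDQh] at this
  have hP'entry : ∀ i j, P' i j = c i * P i j * c j := by
    intro i j
    simp [hP'_def, hDQ_def, Matrix.diagonal_mul, Matrix.mul_diagonal, mul_comm, mul_assoc,
      mul_left_comm]
  have htrP' : P'.trace = ∑ i ∈ Q, P i i := by
    simp only [Matrix.trace, Matrix.diag]
    rw [← Finset.sum_filter_add_sum_filter_not Finset.univ (fun i => i ∈ Q) (fun i => P' i i)]
    have e1 : ∀ i ∈ Finset.univ.filter (fun i => i ∈ Q), P' i i = P i i := by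
      intro i hi
      simp only [Finset.mem_filter] at hi
      simp [hP'entry, hc_def, hi.2]
    have e2 : ∀ i ∈ Finset.univ.filter (fun i => ¬ i ∈ Q), P' i i = 0 := by
      intro i hi
      simp only [Finset.mem_filter] at hi
      simp [hP'entry, hc_def, hi.2]
    rw [Finset.sum_congr rfl e1, Finset.sum_congr rfl e2, Finset.sum_const_zero, add_zero]
    congr 1
    ext i
    simp
  have htrΔ : (Δ * P).trace = (Δ * P').trace := by
    simp only [Matrix.trace, Matrix.diag]
    apply Finset.sum_congr rfl; intro i _
    show (Δ * P) i i = (Δ * P') i i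
    rw [Matrix.mul_apply, Matrix.mul_apply]
    apply Finset.sum_congr rfl; intro j _
    by_cases h : Δ i j = 0
    · simp [h]
    · obtain ⟨hi, hj⟩ := hΔsupp i j h
      rw [hP'entry, hc_def]
      simp [hi, hj]
  set W : Matrix (Fin n) (Fin n) ℝ := (hΔ.eigenvectorUnitary : Matrix (Fin n) (Fin n) ℝ) with hW_def
  have hΔspec : Δ = W * Matrix.diagonal hΔ.eigenvalues * star W := by
    have := hΔ.spectral_theorem
    simpa using this
  set s : Fin n → ℝ := fun k => (star W * P' * W) k k with hs_def
  have hs0 : ∀ k, 0 ≤ s k := fun k => stmt4_diag_conj_nonneg hP'psd W k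
  have hssum : ∑ k, s k = P'.trace := by
    have : ∑ k, s k = (star W * P' * W).trace := by
      simp [Matrix.trace, Matrix.diag, hs_def]
    rw [this, Matrix.trace_mul_cycle,
      (Matrix.mem_unitaryGroup_iff).mp hΔ.eigenvectorUnitary.2, one_mul]
  have step3 : -(K * ∑ i ∈ Q, P i i) ≤ (Δ * P).trace := by
    rw [htrΔ, stmt4_trace_mul_eq Δ P' W hΔ.eigenvalues hΔspec]
    calc -(K * ∑ i ∈ Q, P i i) = ∑ k, (-K) * s k := by
          rw [← Finset.mul_sum, hssum, htrP']; ring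
      _ ≤ ∑ k, hΔ.eigenvalues k * s k := by
          apply Finset.sum_le_sum
          intro k _
          have := abs_le.mp (hΔnorm k)
          nlinarith [hs0 k]
  -- combine
  have hNP : ((M + Δ) * P).trace = (M * P).trace + (Δ * P).trace := by
    rw [Matrix.add_mul, Matrix.trace_add]
  have hmain : η * P.trace ≤ K * r + K * ∑ i ∈ Q, P i i := by nlinarith [step1, step2, step3]
  rw [div_mul_eq_mul_div, sub_le_iff_le_add, div_le_iff₀ hK]
  nlinarith [hmain]
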